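/- arXiv:1307.6693 — 2 statements merged into one kernel-verified Lean document; each statement's English description precedes it below -/
import Mathlib

section
/- For every nonnegative integer p and every real number ℓ, the alternating sum over i from 0 to p of (-1)^i * C(ℓ - i, p) * C(p, i) equals 1. -/
/-- Generalized binomial coefficient for a real upper argument. -/
noncomputable def gchoose (x : ℝ) (k : ℕ) : ℝ :=
  (descPochhammer ℝ k).eval x / k.factorial

lemma gchoose_pascal (x : ℝ) (k : ℕ) :
    gchoose x (k + 1) - gchoose (x - 1) (k + 1) = gchoose (x - 1) k := by
  unfold gchoose
  have h1 : (descPochhammer ℝ (k + 1)).eval x = x * (descPochhammer ℝ k).eval (x - 1) := by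
    rw [descPochhammer_succ_left]
    simp [Polynomial.eval_comp]
  have h2 : (descPochhammer ℝ (k + 1)).eval (x - 1)
      = (descPochhammer ℝ k).eval (x - 1) * (x - 1 - k) := descPochhammer_succ_eval k (x - 1)
  rw [h1, h2, Nat.factorial_succ]
  have hk : (k.factorial : ℝ) ≠ 0 := by positivity
  have hk1 : ((k : ℝ) + 1) ≠ 0 := by positivity
  field_simp
  push_cast
  ring

theorem alternating_sum_eq_one (p : ℕ) (ℓ : ℝ) :
    ∑ i ∈ Finset.range (p + 1),
      (-1 : ℝ) ^ i * gchoose (ℓ - i) p * (p.choose i : ℝ) = 1 := by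
  induction p generalizing ℓ with
  | zero => simp [gchoose]
  | succ p ih =>
    have split : ∀ i ∈ Finset.range (p + 1 + 1),
        (-1 : ℝ) ^ i * gchoose (ℓ - i) (p + 1) * ((p+1).choose i : ℝ)
        = (-1 : ℝ) ^ i * gchoose (ℓ - i) (p + 1) * (p.choose i : ℝ)
          + (if i = 0 then 0 else
              (-1 : ℝ) ^ i * gchoose (ℓ - i) (p + 1) * (p.choose (i - 1) : ℝ)) := by
      intro i _
      cases i with
      | zero => simp
      | succ j =>
        simp only [Nat.succ_ne_zero, if_neg, Nat.add_sub_cancel, Nat.choose_succ_succ]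
        push_cast
        ring
    rw [Finset.sum_congr rfl split, Finset.sum_add_distrib]
    have hA : ∑ i ∈ Finset.range (p + 1 + 1),
        (-1 : ℝ) ^ i * gchoose (ℓ - i) (p + 1) * (p.choose i : ℝ)
        = ∑ i ∈ Finset.range (p + 1),
            (-1 : ℝ) ^ i * gchoose (ℓ - i) (p + 1) * (p.choose i : ℝ) := by
      rw [Finset.sum_range_succ, Nat.choose_succ_self]
      simp
    have hB : ∑ i ∈ Finset.range (p + 1 + 1),
        (if i = 0 then 0 else
          (-1 : ℝ) ^ i * gchoose (ℓ - i) (p + 1) * (p.choose (i - 1) : ℝ))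
        = ∑ j ∈ Finset.range (p + 1),
            -((-1 : ℝ) ^ j * gchoose (ℓ - j - 1) (p + 1) * (p.choose j : ℝ)) := by
      rw [Finset.sum_range_succ']
      simp only [Nat.succ_ne_zero, if_neg, if_pos, Nat.add_sub_cancel, add_zero]
      refine Finset.sum_congr rfl fun j _ => ?_
      push_cast
      have : ℓ - (↑j + 1) = ℓ - ↑j - 1 := by ring
      rw [this, pow_succ]
      ring
    rw [hA, hB, ← Finset.sum_add_distrib]
    have : ∀ j ∈ Finset.range (p + 1),
        (-1 : ℝ) ^ j * gchoose (ℓ - j) (p + 1) * (p.choose j : ℝ)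
          + -((-1 : ℝ) ^ j * gchoose (ℓ - j - 1) (p + 1) * (p.choose j : ℝ))
        = (-1 : ℝ) ^ j * gchoose (ℓ - 1 - j) p * (p.choose j : ℝ) := by
      intro j _
      have h := gchoose_pascal (ℓ - j) p
      have hx : ℓ - ↑j - 1 = ℓ - 1 - ↑j := by ring
      rw [hx] at h
      calc (-1 : ℝ) ^ j * gchoose (ℓ - j) (p + 1) * (p.choose j : ℝ)
            + -((-1 : ℝ) ^ j * gchoose (ℓ - j - 1) (p + 1) * (p.choose j : ℝ))
          = (-1 : ℝ) ^ j * (gchoose (ℓ - j) (p + 1) - gchoose (ℓ - 1 - j) (p + 1))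
              * (p.choose j : ℝ) := by rw [hx]; ring
        _ = (-1 : ℝ) ^ j * gchoose (ℓ - 1 - j) p * (p.choose j : ℝ) := by rw [h]
    rw [Finset.sum_congr rfl this]
    exact ih (ℓ - 1)
end

section
/- For every nonnegative integer n and every integer ℓ with 0 ≤ ℓ and ℓ even, the sum over i + j = n of C(2i - ℓ, i) * C(2j + ℓ, j) equals 4^n, where the binomial coefficients are interpreted over the integers via the generalized binomial coefficient. -/
open Finset

def S (a b : ℤ) (n : ℕ) : ℤ :=
  ∑ i ∈ Finset.range (n + 1),
    Ring.choose (2 * (i : ℤ) + a) i * Ring.choose (2 * ((n - i : ℕ) : ℤ) + b) (n - i)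

lemma pasc (r : ℤ) (k : ℕ) :
    Ring.choose (r + 1) (k + 1) = Ring.choose r k + Ring.choose r (k + 1) :=
  Ring.choose_succ_succ r k

lemma shift (n : ℕ) : ∀ a b : ℤ, S a b n = S (a + 1) (b - 1) n := by
  induction n with
  | zero =>
      intro a b
      simp [S, Ring.choose_zero_right]
  | succ n ih =>
      intro a b
      set M : ℤ := ∑ i ∈ Finset.range (n + 2),
        Ring.choose (2 * (i : ℤ) + a) i *
          Ring.choose (2 * ((n + 1 - i : ℕ) : ℤ) + (b - 1)) (n + 1 - i) with hM
      have E1 : S (a + 1) (b - 1) (n + 1) = S (a + 2) (b - 1) n + M := by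
        rw [S, hM, Finset.sum_range_succ' _ (n + 1), Finset.sum_range_succ' _ (n + 1)]
        simp only [Nat.succ_sub_succ, Nat.sub_zero, Nat.cast_zero, mul_zero, zero_add,
          Ring.choose_zero_right, one_mul]
        rw [S, ← add_assoc]
        congr 1
        rw [← Finset.sum_add_distrib]
        refine Finset.sum_congr rfl fun i hi => ?_
        have h1 : (2 * ((i : ℤ) + 1) + (a + 1)) = (2 * (i : ℤ) + (a + 2)) + 1 := by ring
        push_cast
        rw [h1, pasc]
        ring
      have E2 : S a b (n + 1) = S a (b + 1) n + M := by
        rw [S, hM, Finset.sum_range_succ _ (n + 1), Finset.sum_range_succ _ (n + 1)]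
        have hend : Ring.choose (2 * ((n + 1 : ℕ) : ℤ) + a) (n + 1) *
            Ring.choose (2 * ((n + 1 - (n + 1) : ℕ) : ℤ) + b) (n + 1 - (n + 1))
            = Ring.choose (2 * ((n + 1 : ℕ) : ℤ) + a) (n + 1) *
              Ring.choose (2 * ((n + 1 - (n + 1) : ℕ) : ℤ) + (b - 1)) (n + 1 - (n + 1)) := by
          simp [Ring.choose_zero_right]
        rw [hend]
        have hpt : ∑ x ∈ Finset.range (n + 1),
            Ring.choose (2 * (x : ℤ) + a) x *
              Ring.choose (2 * ((n + 1 - x : ℕ) : ℤ) + b) (n + 1 - x)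
            = ∑ x ∈ Finset.range (n + 1),
              (Ring.choose (2 * (x : ℤ) + a) x *
                Ring.choose (2 * ((n - x : ℕ) : ℤ) + (b + 1)) (n - x)
              + Ring.choose (2 * (x : ℤ) + a) x *
                Ring.choose (2 * ((n + 1 - x : ℕ) : ℤ) + (b - 1)) (n + 1 - x)) := by
          refine Finset.sum_congr rfl fun i hi => ?_
          have hi' : i ≤ n := by have := Finset.mem_range.mp hi; omega
          have h0 : n + 1 - i = (n - i) + 1 := by omega
          rw [h0]
          have h1 : (2 * (((n - i : ℕ) : ℤ) + 1) + b)
              = (2 * ((n - i : ℕ) : ℤ) + (b + 1)) + 1 := by ring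
          push_cast
          rw [h1, pasc]
          ring
        rw [hpt, Finset.sum_add_distrib, S]
        ring
      have h1 := ih a (b + 1)
      rw [show b + 1 - 1 = b by ring] at h1
      have h2 := ih (a + 1) b
      rw [show a + 1 + 1 = a + 2 by ring] at h2
      rw [E1, E2, ← h2, ← h1]

lemma shiftk (n : ℕ) (k : ℕ) : ∀ a b : ℤ, S a b n = S (a + k) (b - k) n := by
  induction k with
  | zero => intro a b; simp
  | succ k ih =>
      intro a b
      rw [shift n a b, ih (a + 1) (b - 1)]
      congr 1 <;> push_cast <;> ring

lemma nat_symm (i : ℕ) : Nat.choose (2 * i + 1) (i + 1) = Nat.choose (2 * i + 1) i := by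
  rw [← Nat.choose_symm (by omega : i + 1 ≤ 2 * i + 1)]
  congr 1
  omega

lemma nat_double (i : ℕ) : Nat.choose (2 * i + 2) (i + 1) = 2 * Nat.choose (2 * i + 1) i := by
  have h : Nat.choose (2 * i + 2) (i + 1)
      = Nat.choose (2 * i + 1) i + Nat.choose (2 * i + 1) (i + 1) :=
    Nat.choose_succ_succ (2 * i + 1) i
  rw [h, nat_symm]; ring

lemma int_c (i : ℕ) : Ring.choose (2 * (i : ℤ)) i = ((2 * i).choose i : ℤ) := by
  rw [show (2 * (i : ℤ)) = ((2 * i : ℕ) : ℤ) by push_cast; ring, Ring.choose_natCast]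

lemma int_doubleA (i : ℕ) :
    2 * Ring.choose (2 * (i : ℤ) + 1) i = Ring.choose (2 * ((i + 1 : ℕ) : ℤ)) (i + 1) := by
  rw [show (2 * (i : ℤ) + 1) = ((2 * i + 1 : ℕ) : ℤ) by push_cast; ring, Ring.choose_natCast,
    int_c]
  rw [show 2 * (i + 1) = 2 * i + 2 by ring, nat_double]
  push_cast; ring

lemma int_doubleB (j : ℕ) :
    2 * Ring.choose (2 * ((j + 1 : ℕ) : ℤ) - 1) (j + 1)
      = Ring.choose (2 * ((j + 1 : ℕ) : ℤ)) (j + 1) := by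
  rw [show (2 * ((j + 1 : ℕ) : ℤ) - 1) = ((2 * j + 1 : ℕ) : ℤ) by push_cast; ring,
    Ring.choose_natCast]
  rw [show 2 * ((j + 1 : ℕ) : ℤ) = ((2 * j + 2 : ℕ) : ℤ) by push_cast; ring,
    Ring.choose_natCast]
  rw [show 2 * j + 2 = 2 * (j + 1) by ring] at *
  rw [show Nat.choose (2 * j + 1) (j + 1) = Nat.choose (2 * j + 1) j from nat_symm j]
  rw [show Nat.choose (2 * (j + 1)) (j + 1) = Nat.choose (2 * j + 2) (j + 1) by ring_nf,
    nat_double]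
  push_cast; ring

lemma base : ∀ n : ℕ, S 0 0 n = 4 ^ n := by
  intro n
  induction n with
  | zero => simp [S, Ring.choose_zero_right]
  | succ n ih =>
      have hsh : S 0 0 n = S 1 (-1) n := by
        have := shift n 0 0
        simpa using this
      have E3 : S 0 0 (n + 1) = 4 * S 1 (-1) n := by
        rw [S, S, Finset.sum_range_succ' _ (n + 1), Finset.sum_range_succ _ n,
          Finset.sum_range_succ _ n, mul_add, Finset.mul_sum]
        simp only [Nat.succ_sub_succ, Nat.sub_zero, Nat.sub_self, Nat.cast_zero, mul_zero,
          zero_add, add_zero, Ring.choose_zero_right, one_mul, mul_one]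
        have hmid : ∑ i ∈ Finset.range n,
            4 * (Ring.choose (2 * (i : ℤ) + 1) i *
              Ring.choose (2 * ((n - i : ℕ) : ℤ) + -1) (n - i))
            = ∑ x ∈ Finset.range n,
              Ring.choose (2 * ((x + 1 : ℕ) : ℤ)) (x + 1) *
                Ring.choose (2 * ((n - x : ℕ) : ℤ)) (n - x) := by
          refine Finset.sum_congr rfl fun i hi => ?_
          have hin : i < n := Finset.mem_range.mp hi
          have h0 : n - i = (n - i - 1) + 1 := by omega
          rw [h0, show (2 * (((n - i - 1 : ℕ) + 1 : ℕ) : ℤ) + -1)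
              = 2 * (((n - i - 1 : ℕ) + 1 : ℕ) : ℤ) - 1 by ring,
            ← int_doubleA, ← int_doubleB]
          ring
        have hend : (4 : ℤ) * Ring.choose (2 * (n : ℤ) + 1) n
            = Ring.choose (2 * ((n + 1 : ℕ) : ℤ)) (n + 1)
              + Ring.choose (2 * ((n + 1 : ℕ) : ℤ)) (n + 1) := by
          rw [← int_doubleA]; ring
        rw [hmid, hend]
        ring
      rw [E3, ← hsh, ih]
      ring

theorem generalized_convolution_int (n : ℕ) (ℓ : ℤ) (hℓ : 0 ≤ ℓ) (he : Even ℓ) :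
    ∑ ij ∈ Finset.HasAntidiagonal.antidiagonal n,
      Ring.choose (2 * (ij.1 : ℤ) - ℓ) ij.1 * Ring.choose (2 * (ij.2 : ℤ) + ℓ) ij.2
      = 4 ^ n := by
  rw [Finset.Nat.sum_antidiagonal_eq_sum_range_succ_mk]
  have h1 : ∑ k ∈ Finset.range (n + 1),
      Ring.choose (2 * ((k : ℕ) : ℤ) - ℓ) k * Ring.choose (2 * ((n - k : ℕ) : ℤ) + ℓ) (n - k)
      = S (-ℓ) ℓ n := by
    unfold S
    refine Finset.sum_congr rfl fun i hi => ?_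
    rw [sub_eq_add_neg]
  rw [h1, shiftk n ℓ.toNat, Int.toNat_of_nonneg hℓ]
  simpa using base n
end
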